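/- Let n ≥ 2 and let A be an n×n row-stochastic strictly diagonally dominant positive real matrix. If (c_min(A) − 1)/(n−1)² ≥ 2^{2n·log₂(n)/σ_min(A)}, then the channel capacity equals the closed-form expression: C(A) = U(A). -/

import Mathlib

open Matrix Finset Real

noncomputable def rowEntropy {n : ℕ} (A : Matrix (Fin n) (Fin n) ℝ) (i : Fin n) : ℝ :=
  -∑ k, A i k * Real.logb 2 (A i k)

noncomputable def Kvec {n : ℕ} (A : Matrix (Fin n) (Fin n) ℝ) (j : Fin n) : ℝ :=
  ∑ i, A⁻¹ j i * rowEntropy A i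

noncomputable def Kmax {n : ℕ} (A : Matrix (Fin n) (Fin n) ℝ) : ℝ := ⨆ j, Kvec A j

noncomputable def Kmin {n : ℕ} (A : Matrix (Fin n) (Fin n) ℝ) : ℝ := ⨅ j, Kvec A j

def IsPmf {n : ℕ} (p : Fin n → ℝ) : Prop := (∀ i, 0 ≤ p i) ∧ ∑ i, p i = 1

noncomputable def mutualInfo {n : ℕ} (A : Matrix (Fin n) (Fin n) ℝ) (p : Fin n → ℝ) : ℝ :=
  -(∑ j, Aᵀ.mulVec p j * Real.logb 2 (Aᵀ.mulVec p j))
    + ∑ i, ∑ j, p i * A i j * Real.logb 2 (A i j)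

noncomputable def capacity {n : ℕ} (A : Matrix (Fin n) (Fin n) ℝ) : ℝ :=
  sSup {x : ℝ | ∃ p : Fin n → ℝ, IsPmf p ∧ mutualInfo A p = x}

noncomputable def qStar {n : ℕ} (A : Matrix (Fin n) (Fin n) ℝ) (j : Fin n) : ℝ :=
  (2 : ℝ) ^ (-Kvec A j) / ∑ i, (2 : ℝ) ^ (-Kvec A i)

noncomputable def pStar {n : ℕ} (A : Matrix (Fin n) (Fin n) ℝ) : Fin n → ℝ :=
  (A⁻¹)ᵀ.mulVec (qStar A)

noncomputable def Ubound {n : ℕ} (A : Matrix (Fin n) (Fin n) ℝ) : ℝ :=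
  -(∑ j, qStar A j * Real.logb 2 (qStar A j))
    + ∑ i, ∑ j, pStar A i * A i j * Real.logb 2 (A i j)

noncomputable def cmin {n : ℕ} (A : Matrix (Fin n) (Fin n) ℝ) : ℝ :=
  ⨅ i, A i i / ∑ j ∈ Finset.univ.erase i, |A i j|

noncomputable def Hmax {n : ℕ} (A : Matrix (Fin n) (Fin n) ℝ) : ℝ := ⨆ i, rowEntropy A i

noncomputable def sigmaMin {n : ℕ} (A : Matrix (Fin n) (Fin n) ℝ) : ℝ :=
  Real.sqrt (⨅ i, (Matrix.isHermitian_conjTranspose_mul_self A).eigenvalues i)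

def RowStochastic {n : ℕ} (A : Matrix (Fin n) (Fin n) ℝ) : Prop :=
  (∀ i j, 0 ≤ A i j) ∧ ∀ i, ∑ j, A i j = 1

def SDDPos {n : ℕ} (A : Matrix (Fin n) (Fin n) ℝ) : Prop :=
  (∀ i j, 0 < A i j) ∧ ∀ i, ∑ j ∈ Finset.univ.erase i, A i j < A i i

section CapAuxSection
variable {n : ℕ} (A : Matrix (Fin n) (Fin n) ℝ)

lemma gibbs_log {n : ℕ} (p q : Fin n → ℝ) (hp : ∀ i, 0 ≤ p i) (hq : ∀ i, 0 < q i)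
    (hp1 : ∑ i, p i = 1) (hq1 : ∑ i, q i ≤ 1) :
    ∑ i, p i * Real.log (q i) ≤ ∑ i, p i * Real.log (p i) := by
  have key : ∀ i, p i * Real.log (q i) - p i * Real.log (p i) ≤ q i - p i := by
    intro i
    rcases eq_or_lt_of_le (hp i) with h | h
    · simp [← h, (hq i).le]
    · have hlog := Real.log_le_sub_one_of_pos (div_pos (hq i) h)
      rw [Real.log_div (hq i).ne' h.ne'] at hlog
      have h2 := mul_le_mul_of_nonneg_left hlog (hp i)
      have h3 : p i * (q i / p i - 1) = q i - p i := by field_simp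
      nlinarith
  have hsum : ∑ i, (p i * Real.log (q i) - p i * Real.log (p i)) ≤ ∑ i, (q i - p i) :=
    Finset.sum_le_sum fun i _ => key i
  simp only [Finset.sum_sub_distrib, hp1] at hsum
  linarith

lemma gibbs_logb {n : ℕ} (p q : Fin n → ℝ) (hp : ∀ i, 0 ≤ p i) (hq : ∀ i, 0 < q i)
    (hp1 : ∑ i, p i = 1) (hq1 : ∑ i, q i ≤ 1) :
    ∑ i, p i * Real.logb 2 (q i) ≤ ∑ i, p i * Real.logb 2 (p i) := by
  have h := gibbs_log p q hp hq hp1 hq1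
  have hl2 : (0:ℝ) < Real.log 2 := Real.log_pos one_lt_two
  simp only [Real.logb, ← mul_div_assoc, ← Finset.sum_div]
  gcongr

lemma rowEntropy_nonneg {n : ℕ} (A : Matrix (Fin n) (Fin n) ℝ)
    (h0 : ∀ i j, 0 ≤ A i j) (h1 : ∀ i, ∑ j, A i j = 1) (i : Fin n) :
    0 ≤ rowEntropy A i := by
  rw [rowEntropy, neg_nonneg]
  apply Finset.sum_nonpos
  intro k _
  have hle : A i k ≤ 1 := by
    have := Finset.single_le_sum (f := fun j => A i j) (fun j _ => h0 i j) (Finset.mem_univ k)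
    linarith [h1 i]
  rcases eq_or_lt_of_le (h0 i k) with h | h
  · simp [← h]
  · exact mul_nonpos_of_nonneg_of_nonpos h.le (Real.logb_nonpos one_lt_two h.le hle)

lemma rowEntropy_le {n : ℕ} (hn : 2 ≤ n) (A : Matrix (Fin n) (Fin n) ℝ)
    (h0 : ∀ i j, 0 < A i j) (h1 : ∀ i, ∑ j, A i j = 1) (i : Fin n) :
    rowEntropy A i ≤ Real.logb 2 n := by
  have hnpos : (0:ℝ) < n := by positivity
  have := gibbs_logb (fun k => A i k) (fun _ => (n:ℝ)⁻¹) (fun k => (h0 i k).le)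
    (fun _ => by positivity) (h1 i) (by simp [mul_inv_cancel₀ hnpos.ne'])
  simp only [Real.logb_inv, ← Finset.sum_mul, h1 i, one_mul] at this
  rw [rowEntropy]
  linarith

lemma lam_le (i : Fin n) :
    (⨅ i, (Matrix.isHermitian_conjTranspose_mul_self A).eigenvalues i)
      ≤ (Matrix.isHermitian_conjTranspose_mul_self A).eigenvalues i :=
  ciInf_le (Set.Finite.bddBelow (Set.finite_range _)) i

lemma lam_pos (hn : 0 < n) (hdet : A.det ≠ 0) :
    0 < (⨅ i, (Matrix.isHermitian_conjTranspose_mul_self A).eigenvalues i) := by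
  haveI : Nonempty (Fin n) := ⟨⟨0, hn⟩⟩
  have hH := Matrix.isHermitian_conjTranspose_mul_self A
  obtain ⟨i0, hi0⟩ := Finite.exists_min (fun i => hH.eigenvalues i)
  have hge : (hH.eigenvalues i0) ≤ ⨅ i, hH.eigenvalues i := le_ciInf hi0
  have hdet2 : (Aᴴ * A).det ≠ 0 := by
    rw [Matrix.det_mul, Matrix.conjTranspose_eq_transpose_of_trivial, Matrix.det_transpose]
    exact mul_ne_zero hdet hdet
  have hprod : (Aᴴ * A).det = ∏ i, hH.eigenvalues i := by
    simpa using hH.det_eq_prod_eigenvalues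
  have hne : hH.eigenvalues i0 ≠ 0 := fun h => hdet2 (by
    rw [hprod]; exact Finset.prod_eq_zero (Finset.mem_univ i0) h)
  have hnn : 0 ≤ hH.eigenvalues i0 := Matrix.eigenvalues_conjTranspose_mul_self_nonneg A i0
  exact lt_of_lt_of_le (lt_of_le_of_ne hnn (Ne.symm hne)) hge

lemma rayleigh (x : Fin n → ℝ) :
    (⨅ i, (Matrix.isHermitian_conjTranspose_mul_self A).eigenvalues i) * (x ⬝ᵥ x)
      ≤ (A *ᵥ x) ⬝ᵥ (A *ᵥ x) := by
  classical
  set hH := Matrix.isHermitian_conjTranspose_mul_self A with hHdef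
  set lam := ⨅ i, hH.eigenvalues i with hlam
  set U : Matrix (Fin n) (Fin n) ℝ :=
    (Matrix.IsHermitian.eigenvectorUnitary hH : Matrix (Fin n) (Fin n) ℝ) with hU
  have hspec := hH.spectral_theorem
  have hUU : U * star U = 1 :=
    Matrix.mem_unitaryGroup_iff.mp (Matrix.IsHermitian.eigenvectorUnitary hH).2
  have key : U * Matrix.diagonal (RCLike.ofReal ∘ hH.eigenvalues) * star U - lam • 1
      = U * Matrix.diagonal (fun i => hH.eigenvalues i - lam) * star U := by
    have h1 : (lam • 1 : Matrix (Fin n) (Fin n) ℝ) = U * (lam • 1) * star U := by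
      rw [Matrix.mul_smul, Matrix.smul_mul, Matrix.mul_one, hUU]
    rw [h1, ← Matrix.sub_mul, ← Matrix.mul_sub]
    congr 2
    rw [Matrix.smul_one_eq_diagonal, ← Matrix.diagonal_sub]
    norm_num [RCLike.ofReal_real_eq_id]
  have hdiag : Aᴴ * A - lam • 1 = U * Matrix.diagonal (fun i => hH.eigenvalues i - lam) * star U :=
    (congrArg (· - lam • (1 : Matrix (Fin n) (Fin n) ℝ)) hspec).trans key
  have hps : Matrix.PosSemidef (Aᴴ * A - lam • 1) := by
    rw [hdiag]
    refine Matrix.PosSemidef.mul_mul_conjTranspose_same ?_ U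
    refine Matrix.posSemidef_diagonal_iff.mpr fun i => ?_
    have := lam_le A i
    linarith
  have h2 := hps.dotProduct_mulVec_nonneg x
  simp only [star_trivial, Matrix.sub_mulVec, dotProduct_sub, Matrix.smul_mulVec,
    Matrix.one_mulVec, dotProduct_smul, smul_eq_mul] at h2
  have h3 : x ⬝ᵥ (Aᴴ * A) *ᵥ x = (A *ᵥ x) ⬝ᵥ (A *ᵥ x) := by
    rw [← Matrix.mulVec_mulVec, Matrix.dotProduct_mulVec,
      Matrix.conjTranspose_eq_transpose_of_trivial, Matrix.vecMul_transpose]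
  linarith [h2, h3.symm.le]

lemma invRow_abs_sum_le (hn : 0 < n) (hdet : IsUnit A.det) (j : Fin n) :
    ∑ i, |A⁻¹ j i| ≤ n / sigmaMin A := by
  classical
  set lam := ⨅ i, (Matrix.isHermitian_conjTranspose_mul_self A).eigenvalues i with hlam
  have hlampos : 0 < lam := lam_pos A hn (hdet.ne_zero)
  have colbound : ∀ i : Fin n, lam * (∑ k, (A⁻¹ k i)^2) ≤ 1 := by
    intro i
    have hx := rayleigh A (fun k => A⁻¹ k i)
    have hAx : (A *ᵥ fun k => A⁻¹ k i) = fun j' => (1 : Matrix (Fin n) (Fin n) ℝ) j' i := by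
      funext j'
      rw [← Matrix.mul_nonsing_inv A hdet]
      simp [Matrix.mulVec, Matrix.mul_apply, dotProduct]
    rw [hAx] at hx
    have h1 : (fun j' => (1 : Matrix (Fin n) (Fin n) ℝ) j' i) ⬝ᵥ
        (fun j' => (1 : Matrix (Fin n) (Fin n) ℝ) j' i) = 1 := by
      simp [dotProduct, Matrix.one_apply, Finset.sum_ite_eq]
    rw [h1] at hx
    refine le_trans (le_of_eq ?_) hx
    congr 1
    simp [dotProduct, sq]
  have rowsq : ∑ i, (A⁻¹ j i)^2 ≤ n / lam := by
    have h1 : ∀ i : Fin n, (A⁻¹ j i)^2 ≤ 1 / lam := by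
      intro i
      have h2 : (A⁻¹ j i)^2 ≤ ∑ k, (A⁻¹ k i)^2 :=
        Finset.single_le_sum (f := fun k => (A⁻¹ k i)^2) (fun k _ => sq_nonneg _)
          (Finset.mem_univ j)
      have h3 := colbound i
      rw [le_div_iff₀ hlampos]
      nlinarith
    calc ∑ i, (A⁻¹ j i)^2 ≤ ∑ _i : Fin n, 1 / lam := Finset.sum_le_sum fun i _ => h1 i
    _ = n / lam := by simp [div_eq_mul_inv, mul_comm]
  have rowsq' : lam * ∑ i, (A⁻¹ j i)^2 ≤ n := by
    rw [mul_comm, ← le_div_iff₀ hlampos]; exact rowsq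
  have cauchy : (∑ i, |A⁻¹ j i|)^2 ≤ n * ∑ i, (A⁻¹ j i)^2 := by
    have := sq_sum_le_card_mul_sum_sq (s := Finset.univ) (f := fun i => |A⁻¹ j i|)
    simpa [sq_abs] using this
  have ha : 0 ≤ ∑ i, |A⁻¹ j i| := Finset.sum_nonneg fun i _ => abs_nonneg _
  have hs : Real.sqrt lam > 0 := Real.sqrt_pos.mpr hlampos
  rw [sigmaMin, ← hlam, le_div_iff₀ hs]
  have hsq : (Real.sqrt lam)^2 = lam := Real.sq_sqrt hlampos.le
  have hnn : (0:ℝ) < n := by positivity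
  have key2 : ((∑ i, |A⁻¹ j i|) * Real.sqrt lam)^2 ≤ (n:ℝ)^2 := by
    rw [mul_pow, hsq]
    nlinarith [mul_le_mul_of_nonneg_right cauchy hlampos.le,
      mul_le_mul_of_nonneg_left rowsq' hnn.le]
  have hpos2 : 0 ≤ (∑ i, |A⁻¹ j i|) * Real.sqrt lam := by positivity
  nlinarith [key2, hpos2, hnn]

lemma Rpos (hn : 2 ≤ n) (hA : SDDPos A) (j : Fin n) :
    0 < ∑ k ∈ Finset.univ.erase j, A j k := by
  have : (Finset.univ.erase j).Nonempty := by
    rw [← Finset.card_pos, Finset.card_erase_of_mem (Finset.mem_univ j)]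
    simp [Finset.card_univ]
    omega
  exact Finset.sum_pos (fun k _ => hA.1 j k) this

lemma cmin_le_mul (hn : 2 ≤ n) (hA : SDDPos A) (j : Fin n) :
    cmin A * (∑ k ∈ Finset.univ.erase j, A j k) ≤ A j j := by
  have hR := Rpos A hn hA j
  have h1 : cmin A ≤ A j j / ∑ k ∈ Finset.univ.erase j, |A j k| :=
    ciInf_le (Set.Finite.bddBelow (Set.finite_range _)) j
  have habs : ∑ k ∈ Finset.univ.erase j, |A j k| = ∑ k ∈ Finset.univ.erase j, A j k :=
    Finset.sum_congr rfl fun k _ => abs_of_pos (hA.1 j k)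
  rw [habs] at h1
  rw [← le_div_iff₀ hR]
  exact h1

lemma inv_entries (hn : 2 ≤ n) (hA : SDDPos A) (hdet : IsUnit A.det) (hc : 1 < cmin A)
    (i : Fin n) :
    0 < A⁻¹ i i ∧ ∀ j, j ≠ i → cmin A * |A⁻¹ j i| ≤ A⁻¹ i i := by
  classical
  have hid : ∀ j, ∑ k, A j k * A⁻¹ k i = if j = i then (1:ℝ) else 0 := by
    intro j
    have := Matrix.mul_nonsing_inv A hdet
    have h2 := congrFun (congrFun this j) i
    simpa [Matrix.mul_apply, Matrix.one_apply] using h2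
  obtain ⟨k0, _, hk0⟩ := Finset.exists_max_image Finset.univ (fun k => |A⁻¹ k i|)
    ⟨i, Finset.mem_univ i⟩
  set M := |A⁻¹ k0 i| with hM
  have hMax : ∀ k, |A⁻¹ k i| ≤ M := fun k => hk0 k (Finset.mem_univ k)
  have hMnonneg : 0 ≤ M := abs_nonneg _
  have hMpos : 0 < M := by
    rcases eq_or_lt_of_le hMnonneg with h | h
    · exfalso
      have hz : ∀ k, A⁻¹ k i = 0 := by
        intro k
        have := hMax k
        rw [← h] at this
        exact abs_eq_zero.mp (le_antisymm this (abs_nonneg _))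
      have := hid i
      simp [hz] at this
    · exact h
  have hstep : ∀ j, j ≠ i → cmin A * |A⁻¹ j i| ≤ M := by
    intro j hj
    have hRj := Rpos A hn hA j
    have hidj := hid j
    rw [if_neg hj] at hidj
    have hsplit : A j j * A⁻¹ j i = -∑ k ∈ Finset.univ.erase j, A j k * A⁻¹ k i := by
      have := Finset.add_sum_erase Finset.univ (fun k => A j k * A⁻¹ k i) (Finset.mem_univ j)
      rw [hidj] at this
      linarith [this]
    have habs : A j j * |A⁻¹ j i| ≤ (∑ k ∈ Finset.univ.erase j, A j k) * M := by
      have h1 : |A j j * A⁻¹ j i| = A j j * |A⁻¹ j i| := by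
        rw [abs_mul, abs_of_pos (hA.1 j j)]
      rw [← h1, hsplit, abs_neg]
      calc |∑ k ∈ Finset.univ.erase j, A j k * A⁻¹ k i|
          ≤ ∑ k ∈ Finset.univ.erase j, |A j k * A⁻¹ k i| := Finset.abs_sum_le_sum_abs _ _
        _ ≤ ∑ k ∈ Finset.univ.erase j, A j k * M := by
            refine Finset.sum_le_sum fun k _ => ?_
            rw [abs_mul, abs_of_pos (hA.1 j k)]
            exact mul_le_mul_of_nonneg_left (hMax k) (hA.1 j k).le
        _ = (∑ k ∈ Finset.univ.erase j, A j k) * M := by rw [Finset.sum_mul]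
    have hcm := cmin_le_mul A hn hA j
    -- cmin * R_j * |x| ≤ A j j * |x| ≤ R_j * M  => cmin * |x| ≤ M
    have h2 : cmin A * (∑ k ∈ Finset.univ.erase j, A j k) * |A⁻¹ j i|
        ≤ (∑ k ∈ Finset.univ.erase j, A j k) * M :=
      le_trans (mul_le_mul_of_nonneg_right hcm (abs_nonneg _)) habs
    have h3 : (∑ k ∈ Finset.univ.erase j, A j k) * (cmin A * |A⁻¹ j i|)
        ≤ (∑ k ∈ Finset.univ.erase j, A j k) * M := by ring_nf; ring_nf at h2; linarith
    exact le_of_mul_le_mul_left h3 hRj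
  have hk0i : k0 = i := by
    by_contra hne
    have := hstep k0 hne
    nlinarith [hMpos, hc]
  rw [hk0i] at hM
  have hdiagpos : 0 < A⁻¹ i i := by
    by_contra hle
    push_neg at hle
    have hMeq : M = -(A⁻¹ i i) := by rw [hM, abs_of_nonpos hle]
    have hidi := hid i
    rw [if_pos rfl] at hidi
    have hRi := Rpos A hn hA i
    have hsum : ∑ k ∈ Finset.univ.erase i, A i k * A⁻¹ k i
        ≤ (∑ k ∈ Finset.univ.erase i, A i k) * M := by
      calc ∑ k ∈ Finset.univ.erase i, A i k * A⁻¹ k i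
          ≤ ∑ k ∈ Finset.univ.erase i, A i k * M := by
            refine Finset.sum_le_sum fun k _ => ?_
            exact mul_le_mul_of_nonneg_left ((le_abs_self _).trans (hMax k)) (hA.1 i k).le
        _ = _ := by rw [Finset.sum_mul]
    have hsplit := Finset.add_sum_erase Finset.univ (fun k => A i k * A⁻¹ k i) (Finset.mem_univ i)
    rw [hidi] at hsplit
    -- 1 = A i i * A⁻¹ i i + ∑ erase ≤ A i i * A⁻¹ i i + R_i * M
    have hAii : A i i * A⁻¹ i i = -(A i i) * M := by rw [hMeq]; ring
    nlinarith [hA.2 i, hMpos, hRi]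
  refine ⟨hdiagpos, fun j hj => ?_⟩
  have := hstep j hj
  rwa [hM, abs_of_pos hdiagpos] at this

lemma S_pos (hn : 0 < n) : 0 < ∑ i, (2:ℝ) ^ (-Kvec A i) :=
  Finset.sum_pos (fun i _ => Real.rpow_pos_of_pos two_pos _)
    ⟨⟨0, hn⟩, Finset.mem_univ _⟩

lemma qStar_pos (hn : 0 < n) (j : Fin n) : 0 < qStar A j :=
  div_pos (Real.rpow_pos_of_pos two_pos _) (S_pos A hn)

lemma qStar_sum (hn : 0 < n) : ∑ j, qStar A j = 1 := by
  simp only [qStar, ← Finset.sum_div]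
  exact div_self (S_pos A hn).ne'

lemma logb_qStar (hn : 0 < n) (j : Fin n) :
    Real.logb 2 (qStar A j) = -Kvec A j - Real.logb 2 (∑ i, (2:ℝ) ^ (-Kvec A i)) := by
  rw [qStar, Real.logb_div (by positivity) (S_pos A hn).ne', Real.logb_rpow (by norm_num) (by norm_num)]

lemma A_mul_Kvec (hdet : IsUnit A.det) (i : Fin n) :
    ∑ j, A i j * Kvec A j = rowEntropy A i := by
  have h : A *ᵥ (A⁻¹ *ᵥ (fun k => rowEntropy A k)) = (fun k => rowEntropy A k) := by
    rw [Matrix.mulVec_mulVec, Matrix.mul_nonsing_inv A hdet, Matrix.one_mulVec]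
  have h2 := congrFun h i
  simp only [Matrix.mulVec, dotProduct] at h2
  convert h2 using 2 with j
  rw [Kvec]

lemma mulVecT_apply (p : Fin n → ℝ) (j : Fin n) :
    Aᵀ.mulVec p j = ∑ i, A i j * p i := by
  simp [Matrix.mulVec, dotProduct, Matrix.transpose_apply]

lemma info_le (hn : 0 < n) (hdet : IsUnit A.det) (hst0 : ∀ i j, 0 ≤ A i j)
    (hst1 : ∀ i, ∑ j, A i j = 1) (p : Fin n → ℝ) (hp : IsPmf p) :
    mutualInfo A p ≤ Real.logb 2 (∑ i, (2:ℝ) ^ (-Kvec A i)) := by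
  set y := Aᵀ.mulVec p with hy
  have hy0 : ∀ j, 0 ≤ y j := fun j => by
    rw [hy, mulVecT_apply]
    exact Finset.sum_nonneg fun i _ => mul_nonneg (hst0 i j) (hp.1 i)
  have hy1 : ∑ j, y j = 1 := by
    simp only [hy, mulVecT_apply]
    rw [Finset.sum_comm]
    calc ∑ i, ∑ j, A i j * p i = ∑ i, p i := by
          refine Finset.sum_congr rfl fun i _ => ?_
          rw [← Finset.sum_mul, hst1 i, one_mul]
      _ = 1 := hp.2
  have hgibbs := gibbs_logb y (qStar A) hy0 (qStar_pos A hn) hy1 (le_of_eq (qStar_sum A hn))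
  have hq : ∑ j, y j * Real.logb 2 (qStar A j)
      = -(∑ j, y j * Kvec A j) - Real.logb 2 (∑ i, (2:ℝ) ^ (-Kvec A i)) := by
    have : ∀ j, y j * Real.logb 2 (qStar A j)
        = -(y j * Kvec A j) - y j * Real.logb 2 (∑ i, (2:ℝ) ^ (-Kvec A i)) := by
      intro j
      rw [logb_qStar A hn j]
      ring
    rw [Finset.sum_congr rfl fun j _ => this j, Finset.sum_sub_distrib, Finset.sum_neg_distrib,
      ← Finset.sum_mul, hy1, one_mul]
  have hyK : ∑ j, y j * Kvec A j = ∑ i, p i * rowEntropy A i := by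
    simp only [hy, mulVecT_apply, Finset.sum_mul]
    rw [Finset.sum_comm]
    refine Finset.sum_congr rfl fun i _ => ?_
    rw [← A_mul_Kvec A hdet i, Finset.mul_sum]
    refine Finset.sum_congr rfl fun j _ => by ring
  have hT : ∑ i, ∑ j, p i * A i j * Real.logb 2 (A i j) = -∑ i, p i * rowEntropy A i := by
    rw [← Finset.sum_neg_distrib]
    refine Finset.sum_congr rfl fun i _ => ?_
    rw [rowEntropy, mul_neg, neg_neg, Finset.mul_sum]
    refine Finset.sum_congr rfl fun j _ => by ring
  rw [mutualInfo, hT]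
  have : -(∑ j, y j * Real.logb 2 (y j)) ≤ -∑ j, y j * Real.logb 2 (qStar A j) := by
    linarith [hgibbs]
  calc -(∑ j, y j * Real.logb 2 (y j)) + -∑ i, p i * rowEntropy A i
      ≤ -∑ j, y j * Real.logb 2 (qStar A j) + -∑ i, p i * rowEntropy A i := by linarith
    _ = Real.logb 2 (∑ i, (2:ℝ) ^ (-Kvec A i)) := by
        rw [hq, hyK]; ring

lemma pStar_apply (i : Fin n) : pStar A i = ∑ j, A⁻¹ j i * qStar A j := by
  simp [pStar, Matrix.mulVec, dotProduct, Matrix.transpose_apply]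

lemma sigmaMin_pos (hn : 0 < n) (hdet : A.det ≠ 0) : 0 < sigmaMin A :=
  Real.sqrt_pos.mpr (lam_pos A hn hdet)

lemma Kvec_abs_le (hn : 2 ≤ n) (h0 : ∀ i j, 0 < A i j) (h1 : ∀ i, ∑ j, A i j = 1)
    (hdet : IsUnit A.det) (j : Fin n) :
    |Kvec A j| ≤ (n / sigmaMin A) * Real.logb 2 n := by
  have hlogn : 0 ≤ Real.logb 2 n := by
    apply Real.logb_nonneg one_lt_two
    have : (2:ℝ) ≤ n := by exact_mod_cast hn
    linarith
  calc |Kvec A j| ≤ ∑ i, |A⁻¹ j i * rowEntropy A i| := Finset.abs_sum_le_sum_abs _ _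
    _ ≤ ∑ i, |A⁻¹ j i| * Real.logb 2 n := by
        refine Finset.sum_le_sum fun i _ => ?_
        rw [abs_mul]
        refine mul_le_mul_of_nonneg_left ?_ (abs_nonneg _)
        rw [abs_of_nonneg (rowEntropy_nonneg A (fun i j => (h0 i j).le) h1 i)]
        exact rowEntropy_le hn A h0 h1 i
    _ = (∑ i, |A⁻¹ j i|) * Real.logb 2 n := by rw [Finset.sum_mul]
    _ ≤ (n / sigmaMin A) * Real.logb 2 n :=
        mul_le_mul_of_nonneg_right (invRow_abs_sum_le A (by omega) hdet j) hlogn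

lemma qRatio (hn : 2 ≤ n) (h0 : ∀ i j, 0 < A i j) (h1 : ∀ i, ∑ j, A i j = 1)
    (hdet : IsUnit A.det)
    (ρ : ℝ) (hρ : (2 : ℝ) ^ (2 * (n : ℝ) * Real.logb 2 (n : ℝ) / sigmaMin A) ≤ ρ)
    (i j : Fin n) : qStar A j ≤ ρ * qStar A i := by
  have hσ : 0 < sigmaMin A := sigmaMin_pos A (by omega) hdet.ne_zero
  have hK : Kvec A i - Kvec A j ≤ 2 * (n : ℝ) * Real.logb 2 (n : ℝ) / sigmaMin A := by
    have hi := Kvec_abs_le A hn h0 h1 hdet i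
    have hj := Kvec_abs_le A hn h0 h1 hdet j
    have habs1 := abs_le.mp hi
    have habs2 := abs_le.mp hj
    have heq : 2 * (n : ℝ) * Real.logb 2 (n : ℝ) / sigmaMin A
        = 2 * ((n / sigmaMin A) * Real.logb 2 n) := by
      field_simp
    rw [heq]
    linarith [habs1.2, habs2.1]
  have hexp : (2:ℝ) ^ (Kvec A i - Kvec A j) ≤ ρ := by
    refine le_trans ?_ hρ
    exact Real.rpow_le_rpow_of_exponent_le one_le_two hK
  have hmul : (2:ℝ) ^ (-Kvec A j) ≤ ρ * (2:ℝ) ^ (-Kvec A i) := by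
    have : (2:ℝ) ^ (-Kvec A j) = (2:ℝ) ^ (Kvec A i - Kvec A j) * (2:ℝ) ^ (-Kvec A i) := by
      rw [← Real.rpow_add two_pos]
      ring_nf
    rw [this]
    exact mul_le_mul_of_nonneg_right hexp (Real.rpow_pos_of_pos two_pos _).le
  have hS := S_pos A (by omega)
  rw [qStar, qStar, ← mul_div_assoc, div_le_div_iff₀ hS hS]
  exact mul_le_mul_of_nonneg_right (by exact hmul) hS.le |>.trans (le_of_eq rfl)

lemma pStar_nonneg (hn : 2 ≤ n) (hA : SDDPos A) (h1 : ∀ i, ∑ j, A i j = 1)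
    (hdet : IsUnit A.det) (hc : 1 < cmin A)
    (ρ : ℝ) (hρpos : 0 < ρ) (hρle : (n - 1 : ℝ) * ρ ≤ cmin A)
    (hq : ∀ i j, qStar A j ≤ ρ * qStar A i) (i : Fin n) :
    0 ≤ pStar A i := by
  obtain ⟨hDpos, hoff⟩ := inv_entries A hn hA hdet hc i
  have hcpos : 0 < cmin A := lt_trans one_pos hc
  have hqi := qStar_pos A (by omega) i
  rw [pStar_apply, ← Finset.add_sum_erase Finset.univ _ (Finset.mem_univ i)]
  have hterm : ∀ j ∈ Finset.univ.erase i,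
      -(A⁻¹ i i / cmin A * (ρ * qStar A i)) ≤ A⁻¹ j i * qStar A j := by
    intro j hj
    have hji := Finset.ne_of_mem_erase hj
    have h2 := hoff j hji
    have hqj := qStar_pos A (by omega) j
    have h3 : |A⁻¹ j i| ≤ A⁻¹ i i / cmin A := by
      rw [le_div_iff₀ hcpos]; linarith [h2]
    have h4 : A⁻¹ j i * qStar A j ≥ -(|A⁻¹ j i| * qStar A j) := by
      rw [neg_mul_eq_neg_mul]
      exact mul_le_mul_of_nonneg_right (neg_abs_le _) hqj.le
    have h5 : |A⁻¹ j i| * qStar A j ≤ A⁻¹ i i / cmin A * (ρ * qStar A i) := by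
      refine mul_le_mul h3 (hq i j) hqj.le ?_
      positivity
    linarith
  have hsum : ∑ j ∈ Finset.univ.erase i, A⁻¹ j i * qStar A j
      ≥ -((n - 1 : ℝ) * (A⁻¹ i i / cmin A * (ρ * qStar A i))) := by
    have := Finset.sum_le_sum hterm
    have hcard : (Finset.univ.erase i).card = n - 1 := by
      rw [Finset.card_erase_of_mem (Finset.mem_univ i), Finset.card_univ, Fintype.card_fin]
    have hconst : ∑ _j ∈ Finset.univ.erase i, -(A⁻¹ i i / cmin A * (ρ * qStar A i))
        = -((n - 1 : ℝ) * (A⁻¹ i i / cmin A * (ρ * qStar A i))) := by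
      rw [Finset.sum_const, hcard, nsmul_eq_mul]
      have : ((n - 1 : ℕ) : ℝ) = (n : ℝ) - 1 := by
        have : 1 ≤ n := by omega
        push_cast [Nat.cast_sub this]
        ring
      rw [this]
      ring
    rw [← hconst]
    exact this
  have hkey : (n - 1 : ℝ) * (A⁻¹ i i / cmin A * (ρ * qStar A i)) ≤ A⁻¹ i i * qStar A i := by
    rw [div_mul_eq_mul_div, ← mul_div_assoc, div_le_iff₀ hcpos]
    have hρq : (n-1:ℝ) * ρ * (A⁻¹ i i * qStar A i) ≤ cmin A * (A⁻¹ i i * qStar A i) := by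
      refine mul_le_mul_of_nonneg_right hρle (by positivity)
    nlinarith [hρq]
  linarith [hsum, hkey]

lemma T_eq (p : Fin n → ℝ) :
    ∑ i, ∑ j, p i * A i j * Real.logb 2 (A i j) = -∑ i, p i * rowEntropy A i := by
  rw [← Finset.sum_neg_distrib]
  refine Finset.sum_congr rfl fun i _ => ?_
  rw [rowEntropy, mul_neg, neg_neg, Finset.mul_sum]
  exact Finset.sum_congr rfl fun j _ => by ring

lemma pStar_dot_H : ∑ i, pStar A i * rowEntropy A i = ∑ j, qStar A j * Kvec A j := by
  simp only [pStar_apply, Finset.sum_mul]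
  rw [Finset.sum_comm]
  refine Finset.sum_congr rfl fun j _ => ?_
  rw [Kvec, Finset.mul_sum]
  exact Finset.sum_congr rfl fun i _ => by ring

lemma Ubound_eq (hn : 0 < n) :
    Ubound A = Real.logb 2 (∑ i, (2:ℝ) ^ (-Kvec A i)) := by
  rw [Ubound, T_eq, pStar_dot_H]
  have h1 : ∑ j, qStar A j * Real.logb 2 (qStar A j)
      = -(∑ j, qStar A j * Kvec A j) - Real.logb 2 (∑ i, (2:ℝ) ^ (-Kvec A i)) := by
    have : ∀ j, qStar A j * Real.logb 2 (qStar A j)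
        = -(qStar A j * Kvec A j) - qStar A j * Real.logb 2 (∑ i, (2:ℝ) ^ (-Kvec A i)) := by
      intro j
      rw [logb_qStar A hn j]
      ring
    rw [Finset.sum_congr rfl fun j _ => this j, Finset.sum_sub_distrib, Finset.sum_neg_distrib,
      ← Finset.sum_mul, qStar_sum A hn, one_mul]
  rw [h1]
  ring

lemma inv_rowsum (hdet : IsUnit A.det) (h1 : ∀ i, ∑ j, A i j = 1) (j : Fin n) :
    ∑ i, A⁻¹ j i = 1 := by
  have hA1 : A *ᵥ (fun _ => (1:ℝ)) = fun _ => (1:ℝ) := by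
    funext i
    simp only [Matrix.mulVec, dotProduct, mul_one]
    exact h1 i
  have h : A⁻¹ *ᵥ (fun _ => (1:ℝ)) = fun _ => (1:ℝ) := by
    conv_lhs => rw [← hA1]
    rw [Matrix.mulVec_mulVec, Matrix.nonsing_inv_mul A hdet, Matrix.one_mulVec]
  have := congrFun h j
  simpa [Matrix.mulVec, dotProduct] using this

lemma pStar_sum (hn : 0 < n) (hdet : IsUnit A.det) (h1 : ∀ i, ∑ j, A i j = 1) :
    ∑ i, pStar A i = 1 := by
  simp only [pStar_apply]
  rw [Finset.sum_comm]
  calc ∑ j, ∑ i, A⁻¹ j i * qStar A j = ∑ j, qStar A j := by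
        refine Finset.sum_congr rfl fun j _ => ?_
        rw [← Finset.sum_mul, inv_rowsum A hdet h1 j, one_mul]
    _ = 1 := qStar_sum A hn

lemma AT_pStar (hdet : IsUnit A.det) : Aᵀ.mulVec (pStar A) = qStar A := by
  rw [pStar, Matrix.mulVec_mulVec, ← Matrix.transpose_mul, Matrix.nonsing_inv_mul A hdet,
    Matrix.transpose_one, Matrix.one_mulVec]

lemma mutualInfo_pStar (hdet : IsUnit A.det) : mutualInfo A (pStar A) = Ubound A := by
  rw [mutualInfo, Ubound, AT_pStar A hdet]

end CapAuxSection

theorem capacity_eq_Ubound_of_simple_cond {n : ℕ} (hn : 2 ≤ n)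
    (A : Matrix (Fin n) (Fin n) ℝ) (hst : RowStochastic A) (hA : SDDPos A)
    (hcond : (2 : ℝ) ^ (2 * (n : ℝ) * Real.logb 2 (n : ℝ) / sigmaMin A) ≤
        (cmin A - 1) / ((n : ℝ) - 1) ^ 2) :
    capacity A = Ubound A := by
  have hn0 : 0 < n := by omega
  have h0 := hA.1
  have h1 := hst.2
  have hdetne : A.det ≠ 0 := by
    apply det_ne_zero_of_sum_row_lt_diag
    intro k
    simp only [Real.norm_eq_abs]
    rw [abs_of_pos (h0 k k)]
    calc ∑ j ∈ Finset.univ.erase k, |A k j|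
        = ∑ j ∈ Finset.univ.erase k, A k j :=
          Finset.sum_congr rfl fun j _ => abs_of_pos (h0 k j)
      _ < A k k := hA.2 k
  have hdet : IsUnit A.det := isUnit_iff_ne_zero.mpr hdetne
  set ρ := (cmin A - 1) / ((n : ℝ) - 1) ^ 2 with hρdef
  have hn1 : (1:ℝ) ≤ (n:ℝ) - 1 := by
    have : (2:ℝ) ≤ (n:ℝ) := by exact_mod_cast hn
    linarith
  have hd2 : (0:ℝ) < ((n:ℝ) - 1)^2 := by positivity
  have hexp_pos : (0:ℝ) < (2 : ℝ) ^ (2 * (n : ℝ) * Real.logb 2 (n : ℝ) / sigmaMin A) :=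
    Real.rpow_pos_of_pos two_pos _
  have hρpos : 0 < ρ := lt_of_lt_of_le hexp_pos hcond
  have hc : 1 < cmin A := by
    have := (div_pos_iff.mp hρpos)
    rcases this with ⟨ha, _⟩ | ⟨_, hb⟩
    · linarith
    · linarith
  have hρle : ((n:ℝ) - 1) * ρ ≤ cmin A := by
    have heq : ((n:ℝ) - 1) * ρ = (cmin A - 1) / ((n:ℝ) - 1) := by
      rw [hρdef]
      field_simp
    rw [heq]
    have h2 : (cmin A - 1) / ((n:ℝ) - 1) ≤ cmin A - 1 :=
      div_le_self (by linarith) hn1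
    linarith
  have hq := qRatio A hn h0 h1 hdet ρ hcond
  have hpnn := pStar_nonneg A hn hA h1 hdet hc ρ hρpos hρle hq
  have hpmf : IsPmf (pStar A) := ⟨hpnn, pStar_sum A hn0 hdet h1⟩
  rw [capacity]
  apply IsGreatest.csSup_eq
  constructor
  · exact ⟨pStar A, hpmf, mutualInfo_pStar A hdet⟩
  · rintro x ⟨p, hp, rfl⟩
    calc mutualInfo A p ≤ Real.logb 2 (∑ i, (2:ℝ) ^ (-Kvec A i)) :=
          info_le A hn0 hdet hst.1 h1 p hp
      _ = Ubound A := (Ubound_eq A hn0).symm
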